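/- Let x be a point with wedge Wedge(x) defined as the intersection of the two closed half-planes H(F(x,θ_b), y(x,θ_b)) and H(F(x,θ_e), y(x,θ_e)), where θ_b, θ_e are the beginning and ending angles of the minimal open arc CA(x) covering MA(x), and assume CA(x) has span ≤ π. Then for every point x' ∉ Wedge(x), W*(x') ≥ W*(x). -/

import Mathlib

open scoped RealInnerProductSpace

noncomputable section

/-- The Euclidean plane. -/
abbrev Plane := EuclideanSpace ℝ (Fin 2)

/-- The point of the plane with coordinates `(a, b)`. -/
def pt (a b : ℝ) : Plane := (WithLp.equiv 2 (Fin 2 → ℝ)).symm ![a, b]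

/-- `Wcap V w x y` = total weight of customers in `V` strictly closer to `y` than to `x`. -/
def Wcap (V : Finset Plane) (w : Plane → ℝ) (x y : Plane) : ℝ :=
  ∑ v ∈ V, if dist v y < dist v x then w v else 0

/-- `Wstar V w R x` = the weight loss of `x`: the supremum of captures over feasible
follower positions `y` with `dist x y ≥ R`. -/
def Wstar (V : Finset Plane) (w : Plane → ℝ) (R : ℝ) (x : Plane) : ℝ :=
  sSup (Wcap V w x '' {y : Plane | R ≤ dist x y})

/-- Unit direction of polar angle `θ`. -/
def dir (θ : ℝ) : Plane := pt (Real.cos θ) (Real.sin θ)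

/-- `Wang V w R x θ` = capture of the follower placed at `x + R•(cos θ, sin θ)` against `x`. -/
def Wang (V : Finset Plane) (w : Plane → ℝ) (R : ℝ) (x : Plane) (θ : ℝ) : ℝ :=
  Wcap V w x (x + R • dir θ)

/-- The weight loss of `x`, as the supremum of captures over the circle of radius `R`. -/
def WstarC (V : Finset Plane) (w : Plane → ℝ) (R : ℝ) (x : Plane) : ℝ :=
  sSup (Set.range (Wang V w R x))

lemma dir_norm (θ : ℝ) : ‖dir θ‖ = 1 := by
  rw [EuclideanSpace.norm_eq]; simp [dir, pt, Fin.sum_univ_two]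

lemma dist_lt_iff (R : ℝ) (hR : 0 < R) (x v : Plane) (θ : ℝ) :
    dist v (x + R • dir θ) < dist v x ↔ R < 2 * ⟪v - x, dir θ⟫ := by
  have h2 : dist v (x + R • dir θ) ^ 2 < dist v x ^ 2 ↔ R < 2 * ⟪v - x, dir θ⟫ := by
    rw [dist_eq_norm, dist_eq_norm,
      show v - (x + R • dir θ) = (v - x) - R • dir θ by abel,
      norm_sub_sq_real, real_inner_smul_right, norm_smul, Real.norm_eq_abs,
      abs_of_pos hR, dir_norm]
    constructor <;> intro h <;> nlinarith
  rw [← h2]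
  exact (pow_lt_pow_iff_left₀ dist_nonneg dist_nonneg two_ne_zero).symm

lemma capture_mono (V : Finset Plane) (w : Plane → ℝ) (hw : ∀ v ∈ V, 0 < w v)
    (R : ℝ) (hR : 0 < R) (x x' : Plane) (θ : ℝ)
    (h : ⟪x' - x, dir θ⟫ ≤ 0) :
    Wang V w R x θ ≤ Wang V w R x' θ := by
  unfold Wang Wcap
  apply Finset.sum_le_sum
  intro v hv
  by_cases hc : dist v (x + R • dir θ) < dist v x
  · rw [if_pos hc, if_pos]
    rw [dist_lt_iff R hR x' v θ]
    rw [dist_lt_iff R hR x v θ] at hc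
    have hsub : ⟪v - x', dir θ⟫ = ⟪v - x, dir θ⟫ - ⟪x' - x, dir θ⟫ := by
      rw [← inner_sub_left]; congr 1; abel
    rw [hsub]; linarith
  · rw [if_neg hc]
    split
    · exact (hw v hv).le
    · exact le_refl _

/-- wedge pruning. With `θb, θe` the endpoints of the minimal open arc
`CA(x)` covering the maximizing angles (span at most `π`), every point outside
`Wedge(x)` has weight loss at least `W*(x)`. -/
theorem stmt_12 (V : Finset Plane) (w : Plane → ℝ) (hw : ∀ v ∈ V, 0 < w v)
    (R : ℝ) (hR : 0 < R) (x : Plane) (θb θe : ℝ)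
    (hlt : θb < θe) (hspan : θe - θb ≤ Real.pi)
    (hcover : ∀ θ : ℝ, (∀ θ' : ℝ, Wang V w R x θ' ≤ Wang V w R x θ) →
      ∃ k : ℤ, θ - 2 * Real.pi * k ∈ Set.Ioo θb θe)
    (hminb : ∀ ε > (0 : ℝ), ∃ θ ∈ Set.Ioo θb (θb + ε),
      ∀ θ' : ℝ, Wang V w R x θ' ≤ Wang V w R x θ)
    (hmine : ∀ ε > (0 : ℝ), ∃ θ ∈ Set.Ioo (θe - ε) θe,
      ∀ θ' : ℝ, Wang V w R x θ' ≤ Wang V w R x θ)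
    (x' : Plane)
    (hx' : ¬ (0 ≤ ⟪x' - x, dir θb⟫ ∧ 0 ≤ ⟪x' - x, dir θe⟫)) :
    WstarC V w R x ≤ WstarC V w R x' := by
  have hwnn : ∀ v ∈ V, 0 ≤ w v := fun v hv => (hw v hv).le
  have hWnn : ∀ (z : Plane) (θ : ℝ), 0 ≤ Wang V w R z θ := by
    intro z θ
    apply Finset.sum_nonneg
    intro v hv
    split
    · exact hwnn v hv
    · exact le_refl _
  have hbdd : BddAbove (Set.range (Wang V w R x')) := by
    refine ⟨∑ v ∈ V, w v, ?_⟩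
    rintro _ ⟨θ, rfl⟩
    apply Finset.sum_le_sum
    intro v hv
    split
    · exact le_refl _
    · exact hwnn v hv
  have hcont : Continuous fun θ : ℝ => ⟪x' - x, dir θ⟫ := by
    have he : (fun θ : ℝ => ⟪x' - x, dir θ⟫)
        = fun θ : ℝ => (x' - x) 0 * Real.cos θ + (x' - x) 1 * Real.sin θ := by
      funext θ
      simp [dir, pt, PiLp.inner_apply, Fin.sum_univ_two, RCLike.inner_apply]
      ring
    rw [he]; fun_prop
  have key : ∃ θ : ℝ, (∀ θ' : ℝ, Wang V w R x θ' ≤ Wang V w R x θ)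
      ∧ ⟪x' - x, dir θ⟫ ≤ 0 := by
    rw [not_and_or, not_le, not_le] at hx'
    rcases hx' with hb | he
    · obtain ⟨ε, hε, hball⟩ := Metric.isOpen_iff.mp
        (isOpen_Iio.preimage hcont) θb (by simpa using hb)
      obtain ⟨θ, hθ, hmax⟩ := hminb ε hε
      refine ⟨θ, hmax, le_of_lt (hball ?_)⟩
      rw [Metric.mem_ball, Real.dist_eq, abs_sub_lt_iff]
      constructor <;> [linarith [hθ.1, hθ.2]; linarith [hθ.1, hθ.2]]
    · obtain ⟨ε, hε, hball⟩ := Metric.isOpen_iff.mp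
        (isOpen_Iio.preimage hcont) θe (by simpa using he)
      obtain ⟨θ, hθ, hmax⟩ := hmine ε hε
      refine ⟨θ, hmax, le_of_lt (hball ?_)⟩
      rw [Metric.mem_ball, Real.dist_eq, abs_sub_lt_iff]
      constructor <;> [linarith [hθ.1, hθ.2]; linarith [hθ.1, hθ.2]]
  obtain ⟨θ, hmax, hneg⟩ := key
  calc WstarC V w R x ≤ Wang V w R x θ :=
        Real.sSup_le (by rintro _ ⟨θ', rfl⟩; exact hmax θ') (hWnn x θ)
    _ ≤ Wang V w R x' θ := capture_mono V w hw R hR x x' θ hneg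
    _ ≤ WstarC V w R x' := le_csSup hbdd ⟨θ, rfl⟩
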